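/- arXiv:1004.4391 — 5 statements merged into one kernel-verified Lean document; each statement's English description precedes it below -/
import Mathlib

section
/- Wald's identity for non-identically distributed summands: Let X₁, X₂, … be independent random variables and Yⱼ = Yⱼ(Xⱼ) nonnegative measurable functions with E Yⱼ < ∞ for all j. Let ψ be a randomized stopping rule with P(τ_ψ < ∞) = 1, where τ_ψ is the stopping time generated by ψ. Then Σ_{n=1}^∞ E[sₙ^ψ (Σ_{j=1}^n Yⱼ)] = Σ_{j=1}^∞ E[Yⱼ] · P(τ_ψ ≥ j), with both sides finite or infinite together. -/
open MeasureTheory Filter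
open scoped ENNReal

/-- Wald's identity for independent, not necessarily identically distributed,
observations (Lemma 2 of the paper): for nonnegative `Yⱼ = Yf j (Xⱼ)` with finite
expectations and a randomized stopping rule `ψ` adapted to the observations with
`P(τ_ψ < ∞) = 1`, one has
`Σₙ E[sₙ (Σ_{j≤n} Yⱼ)] = Σⱼ E[Yⱼ] P(τ_ψ ≥ j)`, where `P(τ_ψ ≥ j) = E[tⱼ]`.
Stated in `ℝ≥0∞`, so both sides are finite or infinite together. -/
theorem wald_identity_nonidentical
    {Ω : Type*} [MeasurableSpace Ω] (P : Measure Ω) [IsProbabilityMeasure P]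
    (X : ℕ → Ω → ℝ) (hX : ∀ j, Measurable (X j))
    (hindep : ProbabilityTheory.iIndepFun X P)
    (ψ : ℕ → Ω → ℝ≥0∞) (hψ1 : ∀ n ω, ψ n ω ≤ 1)
    (Ψ : (n : ℕ) → (Fin (n+1) → ℝ) → ℝ≥0∞) (hΨ : ∀ n, Measurable (Ψ n))
    (hadapt : ∀ n ω, ψ n ω = Ψ n (fun i => X i ω))
    (Yf : ℕ → ℝ → ℝ≥0∞) (hYf : ∀ j, Measurable (Yf j))
    (hYfin : ∀ j, ∫⁻ ω, Yf j (X j ω) ∂P < ⊤)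
    (s t : ℕ → Ω → ℝ≥0∞)
    (hs : ∀ n ω, s n ω = (∏ i ∈ Finset.range n, (1 - ψ i ω)) * ψ n ω)
    (ht : ∀ n ω, t n ω = ∏ i ∈ Finset.range n, (1 - ψ i ω))
    (hstop : ∑' n, ∫⁻ ω, s n ω ∂P = 1) :
    ∑' n, ∫⁻ ω, s n ω * ∑ j ∈ Finset.range (n+1), Yf j (X j ω) ∂P
      = ∑' j, (∫⁻ ω, Yf j (X j ω) ∂P) * ∫⁻ ω, t j ω ∂P := by
  classical
  -- measurability facts
  have hψm : ∀ n, Measurable (ψ n) := by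
    intro n
    have : ψ n = fun ω => Ψ n (fun i => X i ω) := funext (hadapt n)
    rw [this]
    exact (hΨ n).comp (measurable_pi_lambda _ fun i => hX i)
  have htm : ∀ n, Measurable (t n) := by
    intro n
    have : t n = fun ω => ∏ i ∈ Finset.range n, (1 - ψ i ω) := funext (ht n)
    rw [this]
    exact Finset.measurable_prod _ fun i _ => measurable_const.sub (hψm i)
  have hsm : ∀ n, Measurable (s n) := by
    intro n
    have : s n = fun ω => t n ω * ψ n ω := funext fun ω => by rw [hs, ht]
    rw [this]
    exact (htm n).mul (hψm n)
  set Y : ℕ → Ω → ℝ≥0∞ := fun j ω => Yf j (X j ω) with hYdef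
  have hYm : ∀ j, Measurable (Y j) := fun j => (hYf j).comp (hX j)
  -- basic recursions for t and s
  have ht0 : ∀ ω, t 0 ω = 1 := fun ω => by simp [ht]
  have htsucc : ∀ n ω, s n ω + t (n+1) ω = t n ω := by
    intro n ω
    rw [hs, ht, ht, Finset.prod_range_succ, ← mul_add,
      add_tsub_cancel_of_le (hψ1 n ω), mul_one]
  have ht_le1 : ∀ n ω, t n ω ≤ 1 := by
    intro n ω
    rw [ht]
    exact Finset.prod_le_one (fun i _ => zero_le) (fun i _ => tsub_le_self)
  have ht_ne_top : ∀ n ω, t n ω ≠ ⊤ := fun n ω => (lt_of_le_of_lt (ht_le1 n ω) (by simp)).ne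
  -- partial sum identity
  have hpartial : ∀ ω j N, j ≤ N →
      (∑ n ∈ Finset.range N, if j ≤ n then s n ω else 0) + t N ω = t j ω := by
    intro ω j N hjN
    induction N, hjN using Nat.le_induction with
    | base =>
      have : (∑ n ∈ Finset.range j, if j ≤ n then s n ω else 0) = 0 := by
        apply Finset.sum_eq_zero
        intro n hn
        have := Finset.mem_range.1 hn
        rw [if_neg (by omega)]
      rw [this, zero_add]
    | succ N hN ih =>
      rw [Finset.sum_range_succ, if_pos hN, add_assoc, htsucc, ih]
  -- t is antitone in n, define L = limit
  have hanti : ∀ ω, Antitone fun n => t n ω := by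
    intro ω
    apply antitone_nat_of_succ_le
    intro n
    rw [← htsucc n ω]
    exact le_add_self
  set L : Ω → ℝ≥0∞ := fun ω => ⨅ n, t n ω with hLdef
  have hLtend : ∀ ω, Tendsto (fun n => t n ω) atTop (nhds (L ω)) := fun ω =>
    tendsto_atTop_iInf (hanti ω)
  set u : ℕ → Ω → ℝ≥0∞ := fun j ω => ∑' n, if j ≤ n then s n ω else 0 with hudef
  -- pointwise: u j = t j - L
  have hu_eq : ∀ ω j, u j ω = t j ω - L ω := by
    intro ω j
    have h1 : Tendsto (fun N => ∑ n ∈ Finset.range N, if j ≤ n then s n ω else 0)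
        atTop (nhds (u j ω)) := ENNReal.tendsto_nat_tsum _
    have h2 : Tendsto (fun N => t j ω - t N ω) atTop (nhds (t j ω - L ω)) :=
      ENNReal.Tendsto.sub tendsto_const_nhds (hLtend ω) (Or.inl (ht_ne_top j ω))
    have h3 : ∀ᶠ N in atTop, (∑ n ∈ Finset.range N, if j ≤ n then s n ω else 0)
        = t j ω - t N ω := by
      filter_upwards [eventually_ge_atTop j] with N hN
      exact ENNReal.eq_sub_of_add_eq (ht_ne_top N ω) (hpartial ω j N hN)
    exact tendsto_nhds_unique h1 (h2.congr' (h3.mono fun _ h => h.symm))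
  -- u 0 = whole sum
  have hu0 : ∀ ω, u 0 ω = ∑' n, s n ω := by
    intro ω; simp [hudef]
  -- L = 0 a.e.
  have hLm : Measurable L := Measurable.iInf fun n => htm n
  have hu0int : ∫⁻ ω, u 0 ω ∂P = 1 := by
    calc ∫⁻ ω, u 0 ω ∂P = ∫⁻ ω, ∑' n, s n ω ∂P := by simp only [hu0]
      _ = ∑' n, ∫⁻ ω, s n ω ∂P := lintegral_tsum fun n => (hsm n).aemeasurable
      _ = 1 := hstop
  have hsum1 : ∀ ω, u 0 ω + L ω = 1 := by
    intro ω
    have h1 : Tendsto (fun N => (∑ n ∈ Finset.range N, if (0:ℕ) ≤ n then s n ω else 0) + t N ω)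
        atTop (nhds (u 0 ω + L ω)) :=
      Filter.Tendsto.add (ENNReal.tendsto_nat_tsum _) (hLtend ω)
    have h2 : (fun N => (∑ n ∈ Finset.range N, if (0:ℕ) ≤ n then s n ω else 0) + t N ω)
        = fun _ => 1 := by
      funext N
      rw [hpartial ω 0 N (Nat.zero_le N), ht0]
    rw [h2] at h1
    exact (tendsto_nhds_unique h1 tendsto_const_nhds)
  have hLzero : ∀ᵐ ω ∂P, L ω = 0 := by
    have hint : ∫⁻ ω, L ω ∂P = 0 := by
      have : ∫⁻ ω, u 0 ω ∂P + ∫⁻ ω, L ω ∂P = 1 := by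
        rw [← lintegral_add_left (by
          have : u 0 = fun ω => ∑' n, s n ω := funext hu0
          rw [this]; exact Measurable.ennreal_tsum fun n => hsm n)]
        simp only [hsum1]
        simp
      rw [hu0int] at this
      have h2 : (1:ℝ≥0∞) + ∫⁻ ω, L ω ∂P = 1 + 0 := by rw [add_zero]; exact this
      exact (ENNReal.add_right_inj ENNReal.one_ne_top).mp h2
    exact (lintegral_eq_zero_iff hLm).mp hint
  have huae : ∀ j, ∀ᵐ ω ∂P, u j ω = t j ω := by
    intro j
    filter_upwards [hLzero] with ω hω
    rw [hu_eq ω j, hω, tsub_zero]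
  -- independence of t j and Y j
  have hindepY : ∀ j, ProbabilityTheory.IndepFun (t j) (Y j) P := by
    intro j
    have hdisj : Disjoint (Finset.range j) ({j} : Finset ℕ) := by simp
    have h1 := hindep.indepFun_finset (Finset.range j) {j} hdisj hX
    set g : (↥(Finset.range j) → ℝ) → ℝ≥0∞ := fun v =>
      ∏ i ∈ (Finset.range j).attach,
        (1 - Ψ i.1 (fun k : Fin (i.1 + 1) => v ⟨k.1, Finset.mem_range.2
          (lt_of_le_of_lt (Nat.lt_succ_iff.mp k.isLt) (Finset.mem_range.1 i.2))⟩)) with hgdef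
    have hgm : Measurable g := by
      apply Finset.measurable_prod
      intro i _
      exact measurable_const.sub ((hΨ i.1).comp
        (measurable_pi_lambda _ fun k => measurable_pi_apply _))
    set h : (↥({j} : Finset ℕ) → ℝ) → ℝ≥0∞ := fun v =>
      Yf j (v ⟨j, Finset.mem_singleton_self j⟩) with hhdef
    have hhm : Measurable h := (hYf j).comp (measurable_pi_apply _)
    have h2 := h1.comp hgm hhm
    have e1 : g ∘ (fun ω (i : ↥(Finset.range j)) => X i.1 ω) = t j := by
      funext ω
      simp only [Function.comp_apply, hgdef]
      rw [ht]
      rw [← Finset.prod_attach (Finset.range j) (fun i => (1 - ψ i ω))]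
      apply Finset.prod_congr rfl
      intro i _
      rw [hadapt]
    have e2 : h ∘ (fun ω (i : ↥({j} : Finset ℕ)) => X i.1 ω) = Y j := by
      funext ω
      simp [hhdef, hYdef]
    rwa [e1, e2] at h2
  have hmul : ∀ j, ∫⁻ ω, t j ω * Y j ω ∂P = (∫⁻ ω, t j ω ∂P) * ∫⁻ ω, Y j ω ∂P := by
    intro j
    have := ProbabilityTheory.lintegral_mul_eq_lintegral_mul_lintegral_of_indepFun
      (htm j) (hYm j) (hindepY j)
    simpa [Pi.mul_apply] using this
  -- main computation
  calc ∑' n, ∫⁻ ω, s n ω * ∑ j ∈ Finset.range (n+1), Yf j (X j ω) ∂P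
      = ∑' n, ∑ j ∈ Finset.range (n+1), ∫⁻ ω, s n ω * Y j ω ∂P := by
        apply tsum_congr; intro n
        rw [← lintegral_finset_sum _ (f := fun j ω => s n ω * Y j ω) (fun j _ => (hsm n).mul (hYm j))]
        apply lintegral_congr; intro ω
        rw [Finset.mul_sum]
    _ = ∑' n, ∑' j, if j ≤ n then ∫⁻ ω, s n ω * Y j ω ∂P else 0 := by
        apply tsum_congr; intro n
        rw [tsum_eq_sum (s := Finset.range (n+1))
          (fun j hj => if_neg (fun hc => hj (Finset.mem_range.2 (Nat.lt_succ_of_le hc))))]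
        apply Finset.sum_congr rfl
        intro j hj
        rw [if_pos (Nat.lt_succ_iff.mp (Finset.mem_range.1 hj))]
    _ = ∑' j, ∑' n, if j ≤ n then ∫⁻ ω, s n ω * Y j ω ∂P else 0 := ENNReal.tsum_comm
    _ = ∑' j, ∫⁻ ω, u j ω * Y j ω ∂P := by
        apply tsum_congr; intro j
        have step : ∀ n, (if j ≤ n then ∫⁻ ω, s n ω * Y j ω ∂P else 0)
            = ∫⁻ ω, (if j ≤ n then s n ω else 0) * Y j ω ∂P := by
          intro n
          by_cases hc : j ≤ n
          · simp [hc]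
          · simp [hc]
        simp only [step]
        rw [← lintegral_tsum (fun n => by
          by_cases hc : j ≤ n
          · simp only [if_pos hc]; exact ((hsm n).mul (hYm j)).aemeasurable
          · simp only [if_neg hc, zero_mul]; exact aemeasurable_const)]
        apply lintegral_congr; intro ω
        rw [hudef]
        simp only [← ENNReal.tsum_mul_right]
    _ = ∑' j, ∫⁻ ω, t j ω * Y j ω ∂P := by
        apply tsum_congr; intro j
        apply lintegral_congr_ae
        filter_upwards [huae j] with ω hω
        rw [hω]
    _ = ∑' j, (∫⁻ ω, Y j ω ∂P) * ∫⁻ ω, t j ω ∂P := by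
        apply tsum_congr; intro j
        rw [hmul j, mul_comm]
end

section
/- Properties of the truncated continuation-value functions: With v_n^N as defined by the backward recursion and r_{n−1}^N(z;c) = E_{θ₀} v_n^N(z − qₙ; c), for every n: (1) r_n^N(z) ≤ v_n^N(z) for all z; (2) r_n^N is concave and continuous; (3) r_n^N is non-decreasing; (4) z − r_n^N(z) is non-decreasing; (5) g(z) − r_n^N(z) → 0 as z → ±∞, where g(z) = min{0,z}. -/
open MeasureTheory Filter Topology

/-- Bundle of properties preserved by the backward recursion. -/
structure GoodFn (f : ℝ → ℝ) : Prop where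
  le_g : ∀ z, f z ≤ min 0 z
  mono : Monotone f
  mono2 : Monotone (fun z => z - f z)
  conc : ConcaveOn ℝ Set.univ f
  bdd : ∃ M, 0 ≤ M ∧ ∀ z, min 0 z - f z ≤ M
  ttop : Tendsto (fun z => min 0 z - f z) atTop (𝓝 0)
  tbot : Tendsto (fun z => min 0 z - f z) atBot (𝓝 0)

lemma lipschitz_of_mono {f : ℝ → ℝ} (h1 : Monotone f)
    (h2 : Monotone (fun z => z - f z)) : LipschitzWith 1 f := by
  rw [lipschitzWith_iff_dist_le_mul]
  intro a b
  simp only [NNReal.coe_one, one_mul]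
  rcases le_total a b with hab | hab
  · have := h1 hab
    have := h2 hab
    rw [Real.dist_eq, Real.dist_eq]
    rw [abs_of_nonpos (by linarith), abs_of_nonpos (by linarith)]
    simp only at *
    linarith
  · have := h1 hab
    have := h2 hab
    rw [Real.dist_eq, Real.dist_eq]
    rw [abs_of_nonneg (by linarith), abs_of_nonneg (by linarith)]
    simp only at *
    linarith

lemma g_lip : LipschitzWith 1 (fun z : ℝ => min 0 z) :=
  lipschitz_of_mono (fun a b h => min_le_min le_rfl h)
    (by
      intro a b h
      simp only
      rcases le_total a 0 with ha | ha <;> rcases le_total b 0 with hb | hb <;>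
        simp [min_eq_left, min_eq_right, ha, hb] <;> linarith)

lemma goodFn_g : GoodFn (fun z : ℝ => min 0 z) where
  le_g := fun _ => le_rfl
  mono := fun a b h => min_le_min le_rfl h
  mono2 := by
    intro a b h
    simp only
    rcases le_total a 0 with ha | ha <;> rcases le_total b 0 with hb | hb <;>
      simp [min_eq_left, min_eq_right, ha, hb] <;> linarith
  conc := (concaveOn_const 0 convex_univ).inf (concaveOn_id convex_univ)
  bdd := ⟨0, le_rfl, fun z => by simp⟩
  ttop := by simp
  tbot := by simp

section Main

variable {Ω : Type*} [MeasurableSpace Ω] (P : Measure Ω) [IsProbabilityMeasure P]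
  {q : Ω → ℝ} (hq : Integrable q P) (hq0 : ∫ ω, q ω ∂P = 0)
  {f : ℝ → ℝ} (hf : GoodFn f)

include hq hf

lemma integ_comp (z : ℝ) : Integrable (fun ω => f (z - q ω)) P := by
  have hlip : LipschitzWith 1 f := lipschitz_of_mono hf.mono hf.mono2
  have hm : AEStronglyMeasurable (fun ω => f (z - q ω)) P :=
    hlip.continuous.comp_aestronglyMeasurable
      (aestronglyMeasurable_const.sub hq.aestronglyMeasurable)
  refine Integrable.mono' ((integrable_const |f z|).add hq.abs) hm ?_
  filter_upwards with ω
  have h1 : |f (z - q ω) - f z| ≤ |z - q ω - z| := by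
    have := hlip.dist_le_mul (z - q ω) z
    simpa [Real.dist_eq] using this
  have h2 : |z - q ω - z| = |q ω| := by rw [show z - q ω - z = -q ω by ring, abs_neg]
  rw [Real.norm_eq_abs]
  calc |f (z - q ω)| = |f z + (f (z - q ω) - f z)| := by ring_nf
    _ ≤ |f z| + |f (z - q ω) - f z| := abs_add_le _ _
    _ ≤ |f z| + |q ω| := by rw [← h2]; linarith

include hq0 in
lemma goodFn_integral : GoodFn (fun z => ∫ ω, f (z - q ω) ∂P) := by
  have int : ∀ z, Integrable (fun ω => f (z - q ω)) P := integ_comp P hq hf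
  have hzq : ∀ z, Integrable (fun ω => z - q ω) P := fun z => (integrable_const z).sub hq
  have intg : ∀ z, Integrable (fun ω => min 0 (z - q ω)) P :=
    integ_comp P hq goodFn_g
  obtain ⟨M, hM0, hM⟩ := hf.bdd
  -- first: monotone
  have mono : Monotone (fun z => ∫ ω, f (z - q ω) ∂P) := by
    intro a b hab
    exact integral_mono (int a) (int b) fun ω => hf.mono (sub_le_sub_right hab (q ω))
  -- z - r z as an integral
  have key : ∀ z, z - ∫ ω, f (z - q ω) ∂P = ∫ ω, ((z - q ω) - f (z - q ω)) ∂P := by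
    intro z
    rw [integral_sub (hzq z) (int z),
      integral_sub (integrable_const z) hq, hq0, integral_const]
    simp
  have mono2 : Monotone (fun z => z - ∫ ω, f (z - q ω) ∂P) := by
    intro a b hab
    simp only
    rw [key a, key b]
    refine integral_mono ((hzq a).sub (int a))
      ((hzq b).sub (int b)) fun ω => ?_
    exact hf.mono2 (show a - q ω ≤ b - q ω by linarith)
  -- r ≤ g
  have le_g : ∀ z, (∫ ω, f (z - q ω) ∂P) ≤ min 0 z := by
    intro z
    refine le_min ?_ ?_
    · calc (∫ ω, f (z - q ω) ∂P) ≤ ∫ _ω, (0 : ℝ) ∂P :=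
            integral_mono (int z) (integrable_const 0)
              (fun ω => (hf.le_g _).trans (min_le_left _ _))
        _ = 0 := by simp
    · calc (∫ ω, f (z - q ω) ∂P) ≤ ∫ ω, (z - q ω) ∂P :=
            integral_mono (int z) (hzq z)
              (fun ω => (hf.le_g _).trans (min_le_right _ _))
        _ = z := by
            rw [integral_sub (integrable_const z) hq, hq0, integral_const]; simp
  -- concavity
  have conc : ConcaveOn ℝ Set.univ (fun z => ∫ ω, f (z - q ω) ∂P) := by
    refine ⟨convex_univ, fun x _ y _ a b ha hb hab => ?_⟩
    simp only [smul_eq_mul]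
    have hpt : ∀ ω, a * f (x - q ω) + b * f (y - q ω) ≤ f (a * x + b * y - q ω) := by
      intro ω
      have := hf.conc.2 (Set.mem_univ (x - q ω)) (Set.mem_univ (y - q ω)) ha hb hab
      simp only [smul_eq_mul] at this
      have he : a * (x - q ω) + b * (y - q ω) = a * x + b * y - q ω := by
        linear_combination (-(q ω)) * hab
      rw [he] at this
      exact this
    calc a * (∫ ω, f (x - q ω) ∂P) + b * (∫ ω, f (y - q ω) ∂P)
        = ∫ ω, (a * f (x - q ω) + b * f (y - q ω)) ∂P := by
          rw [integral_add ((int x).const_mul a) ((int y).const_mul b),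
            integral_const_mul, integral_const_mul]
      _ ≤ ∫ ω, f (a * x + b * y - q ω) ∂P :=
          integral_mono (((int x).const_mul a).add ((int y).const_mul b))
            (int _) hpt
  -- the deficiency as an integral
  have keyd : ∀ z, min 0 z - ∫ ω, f (z - q ω) ∂P
      = ∫ ω, (min 0 z - f (z - q ω)) ∂P := by
    intro z
    rw [integral_sub (integrable_const (min 0 z)) (int z), integral_const]
    simp
  -- uniform bound on the integrand
  have hbound : ∀ z ω, |min 0 z - f (z - q ω)| ≤ |q ω| + M := by
    intro z ω
    have h1 : |min 0 z - min 0 (z - q ω)| ≤ |q ω| := by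
      have := g_lip.dist_le_mul z (z - q ω)
      simp only [Real.dist_eq, NNReal.coe_one, one_mul] at this
      calc |min 0 z - min 0 (z - q ω)| ≤ |z - (z - q ω)| := this
        _ = |q ω| := by rw [show z - (z - q ω) = q ω by ring]
    have h2 : 0 ≤ min 0 (z - q ω) - f (z - q ω) := by
      have := hf.le_g (z - q ω); linarith
    have h3 : min 0 (z - q ω) - f (z - q ω) ≤ M := hM _
    calc |min 0 z - f (z - q ω)|
        = |(min 0 z - min 0 (z - q ω)) + (min 0 (z - q ω) - f (z - q ω))| := by
          ring_nf
      _ ≤ |min 0 z - min 0 (z - q ω)| + |min 0 (z - q ω) - f (z - q ω)| :=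
          abs_add_le _ _
      _ ≤ |q ω| + M := by
          rw [abs_of_nonneg h2]; exact add_le_add h1 h3
  have bound_int : Integrable (fun ω => |q ω| + M) P := hq.abs.add (integrable_const M)
  have hmeas : ∀ᶠ z in (atTop : Filter ℝ),
      AEStronglyMeasurable (fun ω => min 0 z - f (z - q ω)) P :=
    Eventually.of_forall fun z =>
      ((integrable_const (min 0 z)).sub (int z)).aestronglyMeasurable
  have hmeas' : ∀ᶠ z in (atBot : Filter ℝ),
      AEStronglyMeasurable (fun ω => min 0 z - f (z - q ω)) P :=
    Eventually.of_forall fun z =>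
      ((integrable_const (min 0 z)).sub (int z)).aestronglyMeasurable
  -- limit at +∞
  have ttop : Tendsto (fun z => min 0 z - ∫ ω, f (z - q ω) ∂P) atTop (𝓝 0) := by
    have h := tendsto_integral_filter_of_dominated_convergence (μ := P)
      (F := fun z ω => min 0 z - f (z - q ω)) (f := fun _ => (0 : ℝ))
      (fun ω => |q ω| + M) hmeas
      (Eventually.of_forall fun z => ae_of_all _ fun ω => by
        rw [Real.norm_eq_abs]; exact hbound z ω)
      bound_int
      (ae_of_all _ fun ω => ?_)
    · simp only [integral_zero] at h
      exact Tendsto.congr (fun z => (keyd z).symm) h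
    · -- pointwise limit 0 at +∞
      have hA : Tendsto (fun z : ℝ => min 0 z) atTop (𝓝 0) := by
        refine Tendsto.congr' ?_ tendsto_const_nhds
        filter_upwards [eventually_ge_atTop (0:ℝ)] with z hz
        simp [min_eq_left hz]
      have hz' : Tendsto (fun z : ℝ => z - q ω) atTop atTop :=
        tendsto_atTop_add_const_right _ _ tendsto_id
      have hB : Tendsto (fun z : ℝ => min 0 (z - q ω) - f (z - q ω)) atTop (𝓝 0) :=
        hf.ttop.comp hz'
      have hC : Tendsto (fun z : ℝ => min 0 (z - q ω)) atTop (𝓝 0) := by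
        refine Tendsto.congr' ?_ tendsto_const_nhds
        filter_upwards [eventually_ge_atTop (q ω)] with z hz
        simp [min_eq_left (by linarith : (0:ℝ) ≤ z - q ω)]
      have : Tendsto (fun z : ℝ => f (z - q ω)) atTop (𝓝 0) := by
        have := hC.sub hB
        simpa using this
      simpa using hA.sub this
  -- limit at -∞
  have tbot : Tendsto (fun z => min 0 z - ∫ ω, f (z - q ω) ∂P) atBot (𝓝 0) := by
    have h := tendsto_integral_filter_of_dominated_convergence (μ := P)
      (F := fun z ω => min 0 z - f (z - q ω)) (f := q)
      (fun ω => |q ω| + M) hmeas'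
      (Eventually.of_forall fun z => ae_of_all _ fun ω => by
        rw [Real.norm_eq_abs]; exact hbound z ω)
      bound_int
      (ae_of_all _ fun ω => ?_)
    · rw [hq0] at h
      exact Tendsto.congr (fun z => (keyd z).symm) h
    · -- pointwise limit q ω at -∞
      have hz' : Tendsto (fun z : ℝ => z - q ω) atBot atBot :=
        tendsto_atBot_add_const_right _ _ tendsto_id
      have hB : Tendsto (fun z : ℝ => min 0 (z - q ω) - f (z - q ω)) atBot (𝓝 0) :=
        hf.tbot.comp hz'
      have hA : Tendsto (fun z : ℝ => min 0 z - min 0 (z - q ω)) atBot (𝓝 (q ω)) := by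
        refine Tendsto.congr' ?_ tendsto_const_nhds
        filter_upwards [eventually_le_atBot (min 0 (q ω))] with z hz
        have hz1 : z ≤ 0 := hz.trans (min_le_left _ _)
        have hz2 : z - q ω ≤ 0 := by
          have := hz.trans (min_le_right _ _); linarith
        simp only [min_eq_right hz1, min_eq_right hz2]
        ring
      have := hA.add hB
      simp only [add_zero] at this
      refine Tendsto.congr (fun z => ?_) this
      ring
  have bdd : ∃ M', 0 ≤ M' ∧ ∀ z, min 0 z - ∫ ω, f (z - q ω) ∂P ≤ M' := by
    refine ⟨(∫ ω, |q ω| ∂P) + M, by positivity, fun z => ?_⟩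
    rw [keyd z]
    calc (∫ ω, (min 0 z - f (z - q ω)) ∂P) ≤ ∫ ω, (|q ω| + M) ∂P :=
          integral_mono ((integrable_const (min 0 z)).sub (int z)) bound_int
            (fun ω => (le_abs_self _).trans (hbound z ω))
      _ = (∫ ω, |q ω| ∂P) + M := by
          rw [integral_add hq.abs (integrable_const M), integral_const]; simp
  exact ⟨le_g, mono, mono2, conc, bdd, ttop, tbot⟩

end Main

lemma goodFn_min {r : ℝ → ℝ} (hr : GoodFn r) {c : ℝ} (hc : 0 < c) :
    GoodFn (fun z => min (min 0 z) (c + r z)) where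
  le_g := fun _ => min_le_left _ _
  mono := fun a b hab =>
    min_le_min (min_le_min le_rfl hab) (add_le_add_right (hr.mono hab) c)
  mono2 := by
    intro a b hab
    have g2 : a - min 0 a ≤ b - min 0 b := goodFn_g.mono2 hab
    have r2 : a - r a ≤ b - r b := hr.mono2 hab
    show a - min (min 0 a) (c + r a) ≤ b - min (min 0 b) (c + r b)
    rcases le_total (min 0 b) (c + r b) with h | h
    · rw [min_eq_left h]
      have hx : a - b + min 0 b ≤ min (min 0 a) (c + r a) :=
        le_min (by linarith) (by linarith)
      linarith
    · rw [min_eq_right h]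
      have hx : a - b + (c + r b) ≤ min (min 0 a) (c + r a) :=
        le_min (by linarith) (by linarith)
      linarith
  conc := goodFn_g.conc.inf ((concaveOn_const c convex_univ).add hr.conc)
  bdd := by
    obtain ⟨M, hM0, hM⟩ := hr.bdd
    refine ⟨M, hM0, fun z => ?_⟩
    have h1 := hM z
    have h2 : min 0 z - M ≤ min (min 0 z) (c + r z) :=
      le_min (by linarith) (by linarith)
    linarith
  ttop := by
    refine Tendsto.congr' ?_ tendsto_const_nhds
    filter_upwards [hr.ttop.eventually_lt_const hc] with z hz
    have hz' : min 0 z - r z < c := hz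
    have h : min (min 0 z) (c + r z) = min 0 z := min_eq_left (by linarith)
    rw [h]; ring
  tbot := by
    refine Tendsto.congr' ?_ tendsto_const_nhds
    filter_upwards [hr.tbot.eventually_lt_const hc] with z hz
    have hz' : min 0 z - r z < c := hz
    have h : min (min 0 z) (c + r z) = min 0 z := min_eq_left (by linarith)
    rw [h]; ring

/-- Properties of the truncated continuation-value functions (Lemma 7 of the
paper): with `g(z) = min{0,z}`, `v_N^N = g`,
`v_n^N(z) = min{g(z), c + E_{θ₀} v_{n+1}^N(z − q_{n+1})}` and
`r_n^N(z) = E_{θ₀} v_{n+1}^N(z − q_{n+1})` for `n < N`, every `r_n^N` satisfies: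
`r_n^N ≤ v_n^N`, it is concave and continuous, non-decreasing, `z − r_n^N(z)` is
non-decreasing, and `g(z) − r_n^N(z) → 0` as `z → ±∞`. -/
theorem truncated_continuation_properties
    {Ω : Type*} [MeasurableSpace Ω] (P : Measure Ω) [IsProbabilityMeasure P]
    (N : ℕ) (c : ℝ) (hc : 0 < c)
    (q : ℕ → Ω → ℝ) (hq : ∀ n, Integrable (q n) P) (hq0 : ∀ n, ∫ ω, q n ω ∂P = 0)
    (v r : ℕ → ℝ → ℝ)
    (hvN : ∀ z, v N z = min 0 z)
    (hrec : ∀ n, n < N → ∀ z,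
      v n z = min (min 0 z) (c + ∫ ω, v (n+1) (z - q (n+1) ω) ∂P))
    (hr : ∀ n, n < N → ∀ z, r n z = ∫ ω, v (n+1) (z - q (n+1) ω) ∂P) :
    ∀ n, n < N →
      (∀ z, r n z ≤ v n z) ∧
      ConcaveOn ℝ Set.univ (r n) ∧ Continuous (r n) ∧
      Monotone (r n) ∧ Monotone (fun z => z - r n z) ∧
      Tendsto (fun z => min 0 z - r n z) atTop (𝓝 0) ∧
      Tendsto (fun z => min 0 z - r n z) atBot (𝓝 0) := by
  have key : ∀ m n, n + m = N → GoodFn (v n) := by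
    intro m
    induction m with
    | zero =>
      intro n h
      have hn : n = N := by omega
      have hv : v n = fun z => min 0 z := by rw [hn]; exact funext hvN
      rw [hv]
      exact goodFn_g
    | succ m ih =>
      intro n h
      have h1 : (n + 1) + m = N := by omega
      have hlt : n < N := by omega
      have hg := goodFn_integral P (hq (n+1)) (hq0 (n+1)) (ih (n+1) h1)
      have hv : v n = fun z => min (min 0 z) (c + ∫ ω, v (n+1) (z - q (n+1) ω) ∂P) :=
        funext (hrec n hlt)
      rw [hv]
      exact goodFn_min hg hc
  intro n hn
  have hgv : GoodFn (v (n+1)) := key (N - (n+1)) (n+1) (by omega)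
  have hgr0 := goodFn_integral P (hq (n+1)) (hq0 (n+1)) hgv
  have hre : r n = fun z => ∫ ω, v (n+1) (z - q (n+1) ω) ∂P := funext (hr n hn)
  have hgr : GoodFn (r n) := by rw [hre]; exact hgr0
  refine ⟨?_, hgr.conc, (lipschitz_of_mono hgr.mono hgr.mono2).continuous,
    hgr.mono, hgr.mono2, hgr.ttop, hgr.tbot⟩
  intro z
  rw [hrec n hn z, ← hr n hn z]
  exact le_min (hgr.le_g z) (by linarith)
end

section
/- Asymptotic limits of the non-truncated value functions: Let v_n(z;c) and r_n(z;c) be the limit value and continuation-value functions satisfying v_{n−1}(z;c) = min{g(z), c + E_{θ₀}v_n(z−qₙ;c)}, and suppose all r_n(0;c) are bounded below by a common constant −K (which holds under Assumptions 1–3 with K = γ₁/(8c) + c). Then for every n: g(z) − r_n(z;c) → 0 as z → +∞ and as z → −∞. Equivalently, r_n(z;c) → 0 as z → +∞ and z − r_n(z;c) → 0 as z → −∞. -/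
open MeasureTheory Filter Topology

/-- Asymptotic limits of the non-truncated value functions (property 5 of
Lemma 11 of the paper): if the limit value functions satisfy the recursion
`v n z = min{g(z), c + E_{θ₀} v (n+1) (z − q_{n+1})}` with
`r n z = E_{θ₀} v (n+1) (z − q_{n+1})`, `v n ≤ g`, the monotonicity properties
hold, and all `r n 0` are bounded below by a common constant `−K`, then
`g(z) − r n (z) → 0` as `z → +∞` and as `z → −∞`. -/
theorem limit_value_boundary_behavior
    {Ω : Type*} [MeasurableSpace Ω] (P : Measure Ω) [IsProbabilityMeasure P]
    (c K : ℝ) (hc : 0 < c)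
    (q : ℕ → Ω → ℝ) (hq : ∀ n, Integrable (q n) P) (hq0 : ∀ n, ∫ ω, q n ω ∂P = 0)
    (v r : ℕ → ℝ → ℝ)
    (hrec : ∀ n z, v n z = min (min 0 z) (c + ∫ ω, v (n+1) (z - q (n+1) ω) ∂P))
    (hrdef : ∀ n z, r n z = ∫ ω, v (n+1) (z - q (n+1) ω) ∂P)
    (hint : ∀ n z, Integrable (fun ω => v (n+1) (z - q (n+1) ω)) P)
    (hvg : ∀ n z, v n z ≤ min 0 z)
    (hmono : ∀ n, Monotone (v n)) (hmono2 : ∀ n, Monotone (fun z => z - v n z))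
    (hK : ∀ n, -K ≤ r n 0) :
    ∀ n, Tendsto (fun z => min 0 z - r n z) atTop (𝓝 0) ∧
      Tendsto (fun z => min 0 z - r n z) atBot (𝓝 0) := by
  classical
  have hrec' : ∀ n z, v n z = min (min 0 z) (c + r n z) := by
    intro n z; rw [hrec n z, hrdef n z]
  -- the limit at +∞
  set L : ℕ → ℝ := fun m => ⨆ z, v m z with hLdef
  have hbddA : ∀ m, BddAbove (Set.range (v m)) := by
    intro m
    exact ⟨0, by rintro x ⟨z, rfl⟩; exact (hvg m z).trans (min_le_left _ _)⟩
  have hLle0 : ∀ m, L m ≤ 0 :=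
    fun m => ciSup_le fun z => (hvg m z).trans (min_le_left _ _)
  have hvtend : ∀ m, Tendsto (v m) atTop (𝓝 (L m)) := fun m =>
    tendsto_atTop_ciSup (hmono m) (hbddA m)
  have hvleL : ∀ m z, v m z ≤ L m := fun m z => le_ciSup (hbddA m) z
  have hrtend : ∀ m, Tendsto (r m) atTop (𝓝 (L (m+1))) := by
    intro m
    have key := MeasureTheory.tendsto_integral_filter_of_dominated_convergence
      (μ := P) (l := atTop) (F := fun z ω => v (m+1) (z - q (m+1) ω))
      (f := fun _ => L (m+1)) (bound := fun ω => |v (m+1) (0 - q (m+1) ω)|)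
      (Eventually.of_forall fun z => (hint m z).1)
      (by
        filter_upwards [eventually_ge_atTop (0:ℝ)] with z hz
        refine Eventually.of_forall fun ω => ?_
        have h1 : v (m+1) (0 - q (m+1) ω) ≤ v (m+1) (z - q (m+1) ω) :=
          hmono (m+1) (by linarith)
        have h2 : v (m+1) (z - q (m+1) ω) ≤ 0 :=
          (hvg (m+1) _).trans (min_le_left _ _)
        have h3 : v (m+1) (0 - q (m+1) ω) ≤ 0 :=
          (hvg (m+1) _).trans (min_le_left _ _)
        rw [Real.norm_eq_abs, abs_of_nonpos h2, abs_of_nonpos h3]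
        linarith)
      ((hint m 0).abs)
      (Eventually.of_forall fun ω => by
        have ht : Tendsto (fun z : ℝ => z - q (m+1) ω) atTop atTop := by
          simpa [sub_eq_add_neg] using
            tendsto_atTop_add_const_right atTop (-(q (m+1) ω)) tendsto_id
        exact (hvtend (m+1)).comp ht)
    simp only [integral_const, measure_univ, ENNReal.toReal_one, probReal_univ, one_smul] at key
    exact key.congr fun z => (hrdef m z).symm
  have hLrec : ∀ m, L m = min 0 (c + L (m+1)) := by
    intro m
    have h1 : Tendsto (fun z => min 0 (c + r m z)) atTop (𝓝 (min 0 (c + L (m+1)))) :=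
      tendsto_const_nhds.min (tendsto_const_nhds.add (hrtend m))
    have h2 : Tendsto (v m) atTop (𝓝 (min 0 (c + L (m+1)))) := by
      refine h1.congr' ?_
      filter_upwards [eventually_ge_atTop (0:ℝ)] with z hz
      rw [hrec' m z, min_eq_left hz]
    exact tendsto_nhds_unique (hvtend m) h2
  have hrleL : ∀ m z, r m z ≤ L (m+1) := by
    intro m z
    rw [hrdef]
    calc ∫ ω, v (m+1) (z - q (m+1) ω) ∂P ≤ ∫ _, L (m+1) ∂P :=
          integral_mono (hint m z) (integrable_const _) fun ω => hvleL (m+1) _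
      _ = L (m+1) := by simp
  have hKL : ∀ m, -K ≤ L (m+1) := fun m => (hK m).trans (hrleL m 0)
  have hLstep : ∀ j, L j < 0 → L (j+1) = L j - c := by
    intro j hj
    have hm := hLrec j
    have hx : c + L (j+1) < 0 := by
      by_contra hge
      push_neg at hge
      rw [min_eq_left hge] at hm
      rw [hm] at hj; exact lt_irrefl _ hj
    rw [min_eq_right (le_of_lt hx)] at hm
    linarith
  have hL0 : ∀ m, L (m+1) = 0 := by
    intro m
    by_contra hne
    have hlt : L (m+1) < 0 := lt_of_le_of_ne (hLle0 _) hne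
    have hiter : ∀ k : ℕ, L (m+1+k) = L (m+1) - k * c ∧ L (m+1+k) < 0 := by
      intro k
      induction k with
      | zero => constructor
                · simp
                · simpa using hlt
      | succ k ih =>
        have h3 := hLstep (m+1+k) ih.2
        refine ⟨?_, ?_⟩
        · rw [show m+1+(k+1) = (m+1+k)+1 from rfl, h3, ih.1]; push_cast; ring
        · rw [show m+1+(k+1) = (m+1+k)+1 from rfl, h3]; linarith [ih.2]
    obtain ⟨k, hk⟩ := exists_nat_gt ((L (m+1) + K) / c)
    have h1 := (hiter k).1
    have h2 : -K ≤ L (m+1+k) := by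
      have he : m+1+k = (m+k)+1 := by omega
      rw [he]; exact hKL (m+k)
    have h4 : L (m+1) + K < (k:ℝ) * c := by
      rw [div_lt_iff₀ hc] at hk; linarith
    rw [h1] at h2
    linarith
  -- the limit at −∞
  set M : ℕ → ℝ := fun m => ⨅ z, (z - v m z) with hMdef
  have hw0 : ∀ m z, 0 ≤ z - v m z := by
    intro m z
    have := (hvg m z).trans (min_le_right 0 z); linarith
  have hbddB : ∀ m, BddBelow (Set.range fun z => z - v m z) :=
    fun m => ⟨0, by rintro x ⟨z, rfl⟩; exact hw0 m z⟩
  have hM0le : ∀ m, 0 ≤ M m := fun m => le_ciInf fun z => hw0 m z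
  have hwtend : ∀ m, Tendsto (fun z => z - v m z) atBot (𝓝 (M m)) := fun m =>
    tendsto_atBot_ciInf (hmono2 m) (hbddB m)
  have hMlew : ∀ m z, M m ≤ z - v m z := fun m z => ciInf_le (hbddB m) z
  have hsub : ∀ m z, z - r m z
      = ∫ ω, ((z - q (m+1) ω) - v (m+1) (z - q (m+1) ω)) ∂P := by
    intro m z
    have h1 : Integrable (fun ω => z - q (m+1) ω) P := (integrable_const z).sub (hq (m+1))
    rw [integral_sub h1 (hint m z),
      integral_sub (integrable_const z) (hq (m+1)), hq0, integral_const,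
      hrdef m z]
    simp
  have hstend : ∀ m, Tendsto (fun z => z - r m z) atBot (𝓝 (M (m+1))) := by
    intro m
    have key := MeasureTheory.tendsto_integral_filter_of_dominated_convergence
      (μ := P) (l := atBot)
      (F := fun z ω => (z - q (m+1) ω) - v (m+1) (z - q (m+1) ω))
      (f := fun _ => M (m+1))
      (bound := fun ω => |(0 - q (m+1) ω) - v (m+1) (0 - q (m+1) ω)|)
      (Eventually.of_forall fun z =>
        ((aestronglyMeasurable_const.sub (hq (m+1)).1).sub (hint m z).1))
      (by
        filter_upwards [eventually_le_atBot (0:ℝ)] with z hz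
        refine Eventually.of_forall fun ω => ?_
        have h1 : (z - q (m+1) ω) - v (m+1) (z - q (m+1) ω)
            ≤ (0 - q (m+1) ω) - v (m+1) (0 - q (m+1) ω) :=
          hmono2 (m+1) (by linarith)
        have h2 := hw0 (m+1) (z - q (m+1) ω)
        have h3 := hw0 (m+1) (0 - q (m+1) ω)
        rw [Real.norm_eq_abs, abs_of_nonneg h2, abs_of_nonneg h3]
        exact h1)
      ((((integrable_const (0:ℝ)).sub (hq (m+1))).sub (hint m 0)).abs)
      (Eventually.of_forall fun ω => by
        have ht : Tendsto (fun z : ℝ => z - q (m+1) ω) atBot atBot := by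
          simpa [sub_eq_add_neg] using
            tendsto_atBot_add_const_right atBot (-(q (m+1) ω)) tendsto_id
        exact (hwtend (m+1)).comp ht)
    simp only [integral_const, measure_univ, ENNReal.toReal_one, probReal_univ, one_smul] at key
    exact key.congr fun z => (hsub m z).symm
  have hMrec : ∀ m, M m = max 0 (M (m+1) - c) := by
    intro m
    have h1 : Tendsto (fun z => max 0 ((z - r m z) - c)) atBot
        (𝓝 (max 0 (M (m+1) - c))) :=
      tendsto_const_nhds.max ((hstend m).sub_const c)
    have h2 : Tendsto (fun z => z - v m z) atBot (𝓝 (max 0 (M (m+1) - c))) := by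
      refine h1.congr' ?_
      filter_upwards [eventually_le_atBot (0:ℝ)] with z hz
      rw [hrec' m z, min_eq_right hz]
      rcases le_total z (c + r m z) with h | h
      · rw [min_eq_left h, max_eq_left (by linarith)]; ring
      · rw [min_eq_right h, max_eq_right (by linarith)]; ring
    exact tendsto_nhds_unique (hwtend m) h2
  have hsgeM : ∀ m z, M (m+1) ≤ z - r m z := by
    intro m z
    rw [hsub m z]
    calc M (m+1) = ∫ _, M (m+1) ∂P := by simp
      _ ≤ _ := integral_mono (integrable_const _)
            (((integrable_const z).sub (hq (m+1))).sub (hint m z))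
            fun ω => hMlew (m+1) _
  have hMleK : ∀ m, M (m+1) ≤ K := by
    intro m
    have h1 := hsgeM m 0
    have h0 := hK m
    linarith
  have hMstep : ∀ j, 0 < M j → M (j+1) = M j + c := by
    intro j hj
    have hm := hMrec j
    have hx : 0 < M (j+1) - c := by
      by_contra hge
      push_neg at hge
      rw [max_eq_left hge] at hm
      rw [hm] at hj; exact lt_irrefl _ hj
    rw [max_eq_right (le_of_lt hx)] at hm
    linarith
  have hM0 : ∀ m, M (m+1) = 0 := by
    intro m
    by_contra hne
    have hlt : 0 < M (m+1) := lt_of_le_of_ne (hM0le _) (Ne.symm hne)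
    have hiter : ∀ k : ℕ, M (m+1+k) = M (m+1) + k * c ∧ 0 < M (m+1+k) := by
      intro k
      induction k with
      | zero => constructor
                · simp
                · simpa using hlt
      | succ k ih =>
        have h3 := hMstep (m+1+k) ih.2
        refine ⟨?_, ?_⟩
        · rw [show m+1+(k+1) = (m+1+k)+1 from rfl, h3, ih.1]; push_cast; ring
        · rw [show m+1+(k+1) = (m+1+k)+1 from rfl, h3]; linarith [ih.2]
    obtain ⟨k, hk⟩ := exists_nat_gt ((K - M (m+1)) / c)
    have h1 := (hiter k).1
    have h2 : M (m+1+k) ≤ K := by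
      have he : m+1+k = (m+k)+1 := by omega
      rw [he]; exact hMleK (m+k)
    have h4 : K - M (m+1) < (k:ℝ) * c := by
      rw [div_lt_iff₀ hc] at hk; linarith
    rw [h1] at h2
    linarith
  -- conclusion
  intro n
  constructor
  · have h1 : Tendsto (fun z => (0:ℝ) - r n z) atTop (𝓝 (0 - L (n+1))) :=
      tendsto_const_nhds.sub (hrtend n)
    have h2 : Tendsto (fun z => min 0 z - r n z) atTop (𝓝 (0 - L (n+1))) := by
      refine h1.congr' ?_
      filter_upwards [eventually_ge_atTop (0:ℝ)] with z hz
      rw [min_eq_left hz]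
    have he : (0:ℝ) - L (n+1) = 0 := by rw [hL0 n]; ring
    rwa [he] at h2
  · have h1 := hstend n
    have h2 : Tendsto (fun z => min 0 z - r n z) atBot (𝓝 (M (n+1))) := by
      refine h1.congr' ?_
      filter_upwards [eventually_le_atBot (0:ℝ)] with z hz
      rw [min_eq_right hz]
    rwa [hM0 n] at h2
end

section
/- Characterization of the continuation region for the non-truncated problem: Let r_n(·;c) satisfy the properties: r_n(z) ≤ g(z) = min{0,z}, r_n concave, continuous, non-decreasing, z − r_n(z) non-decreasing, and g(z) − r_n(z) → 0 as z → ±∞. If c + r_n(0;c) ≤ 0, then there are unique Aₙ(c) ≤ 0 and Bₙ(c) ≥ 0 solving c + r_n(z;c) = g(z) in {z ≤ 0} and {z ≥ 0} respectively, and the conditions 'g(b−zₙ) > c + r_n(b−zₙ;c)' and 'g(b−zₙ) ≥ c + r_n(b−zₙ;c)' are equivalent to 'b−zₙ ∈ (Aₙ(c), Bₙ(c))' and 'b−zₙ ∈ [Aₙ(c), Bₙ(c)]' respectively. If c + r_n(0;c) > 0, the continuation region is empty. -/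
open Filter Topology

private lemma no_two_left (r : ℝ → ℝ) (c : ℝ) (hc : 0 < c)
    (hconc : ConcaveOn ℝ Set.univ r)
    (hbot : Tendsto (fun z => min 0 z - r z) atBot (𝓝 0))
    {z₁ z₂ : ℝ} (h12 : z₁ < z₂) (h2 : z₂ ≤ 0)
    (e1 : c + r z₁ = min 0 z₁) (e2 : c + r z₂ = min 0 z₂) : False := by
  have h1 : z₁ ≤ 0 := le_of_lt (lt_of_lt_of_le h12 h2)
  rw [min_eq_right h1] at e1
  rw [min_eq_right h2] at e2
  have rz1 : r z₁ = z₁ - c := by linarith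
  have rz2 : r z₂ = z₂ - c := by linarith
  have hge : ∀ w ≤ z₁ - 1, c ≤ min 0 w - r w := by
    intro w hw
    have hw1 : w < z₁ := by linarith
    have hw0 : w ≤ 0 := by linarith
    have hdpos : (0:ℝ) < z₂ - w := by linarith
    set a := (z₂ - z₁) / (z₂ - w) with hadef
    set bb := (z₁ - w) / (z₂ - w) with hbdef
    have ha : 0 < a := div_pos (by linarith) hdpos
    have hb : 0 ≤ bb := le_of_lt (div_pos (by linarith) hdpos)
    have hab : a + bb = 1 := by
      rw [hadef, hbdef, ← add_div, div_eq_one_iff_eq (ne_of_gt hdpos)]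
      ring
    have hz1eq : a * w + bb * z₂ = z₁ := by
      rw [hadef, hbdef]
      field_simp
      ring
    have key := hconc.2 (Set.mem_univ w) (Set.mem_univ z₂) (le_of_lt ha) hb hab
    simp only [smul_eq_mul] at key
    rw [hz1eq] at key
    have h1' : bb * r z₂ = bb * z₂ - bb * c := by rw [rz2]; ring
    have hbc : bb * c = c - a * c := by
      have hb1 : bb = 1 - a := by linarith
      rw [hb1]; ring
    have haw : a * r w ≤ a * w - a * c := by linarith [key, h1', hbc, hz1eq, rz1]
    have hrw : r w ≤ w - c := by
      by_contra h
      push_neg at h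
      nlinarith [mul_pos ha (sub_pos.mpr h)]
    rw [min_eq_right hw0]
    linarith
  have h0c : (0:ℝ) ≥ c := by
    refine ge_of_tendsto hbot ?_
    filter_upwards [eventually_le_atBot (z₁ - 1)] with w hw using hge w hw
  linarith

private lemma no_two_right (r : ℝ → ℝ) (c : ℝ) (hc : 0 < c)
    (hconc : ConcaveOn ℝ Set.univ r)
    (htop : Tendsto (fun z => min 0 z - r z) atTop (𝓝 0))
    {z₁ z₂ : ℝ} (h12 : z₁ < z₂) (h1 : 0 ≤ z₁)
    (e1 : c + r z₁ = min 0 z₁) (e2 : c + r z₂ = min 0 z₂) : False := by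
  have h2 : (0:ℝ) ≤ z₂ := le_of_lt (lt_of_le_of_lt h1 h12)
  rw [min_eq_left h1] at e1
  rw [min_eq_left h2] at e2
  have rz1 : r z₁ = -c := by linarith
  have rz2 : r z₂ = -c := by linarith
  have hge : ∀ w, z₂ + 1 ≤ w → c ≤ min 0 w - r w := by
    intro w hw
    have hw2 : z₂ < w := by linarith
    have hw0 : (0:ℝ) ≤ w := by linarith
    have hdpos : (0:ℝ) < w - z₁ := by linarith
    set a := (w - z₂) / (w - z₁) with hadef
    set bb := (z₂ - z₁) / (w - z₁) with hbdef
    have ha : 0 ≤ a := le_of_lt (div_pos (by linarith) hdpos)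
    have hb : 0 < bb := div_pos (by linarith) hdpos
    have hab : a + bb = 1 := by
      rw [hadef, hbdef, ← add_div, div_eq_one_iff_eq (ne_of_gt hdpos)]
      ring
    have hz2eq : a * z₁ + bb * w = z₂ := by
      rw [hadef, hbdef]
      field_simp
      ring
    have key := hconc.2 (Set.mem_univ z₁) (Set.mem_univ w) ha (le_of_lt hb) hab
    simp only [smul_eq_mul] at key
    rw [hz2eq] at key
    have h1' : a * r z₁ = -(a * c) := by rw [rz1]; ring
    have hbc : bb * c = c - a * c := by
      have hb1 : bb = 1 - a := by linarith
      rw [hb1]; ring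
    have haw : bb * r w ≤ -(bb * c) := by linarith [key, h1', hbc, rz2]
    have hrw : r w ≤ -c := by
      by_contra h
      push_neg at h
      nlinarith [mul_pos hb (sub_pos.mpr h)]
    rw [min_eq_left hw0]
    linarith
  have h0c : (0:ℝ) ≥ c := by
    refine ge_of_tendsto htop ?_
    filter_upwards [eventually_ge_atTop (z₂ + 1)] with w hw using hge w hw
  linarith

/-- Characterization of the continuation region for the non-truncated problem
(Theorem 4 / Corollary 3 reduction of the paper): let `r = r_n(·;c)` satisfy the
properties of Lemma 11 and let `c > 0`. If `c + r 0 ≤ 0`, there are unique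
`A ≤ 0` and `B ≥ 0` solving `c + r z = g z` on `{z ≤ 0}` and `{z ≥ 0}`, and the
conditions `g(b−zₙ) > c + r(b−zₙ)` and `g(b−zₙ) ≥ c + r(b−zₙ)` are equivalent to
`b−zₙ ∈ (A,B)` and `b−zₙ ∈ [A,B]` respectively; if `c + r 0 > 0` the
continuation region is empty. Here `g = min{0,·}`. -/
theorem continuation_region_characterization
    (r : ℝ → ℝ) (c : ℝ) (hc : 0 < c)
    (hrg : ∀ z, r z ≤ min 0 z)
    (hconc : ConcaveOn ℝ Set.univ r) (hcont : Continuous r)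
    (hmono : Monotone r) (hmono2 : Monotone (fun z => z - r z))
    (htop : Tendsto (fun z => min 0 z - r z) atTop (𝓝 0))
    (hbot : Tendsto (fun z => min 0 z - r z) atBot (𝓝 0))
    (b zn : ℝ) :
    (c + r 0 ≤ 0 →
      ∃ A B : ℝ, A ≤ 0 ∧ 0 ≤ B ∧
        c + r A = min 0 A ∧ c + r B = min 0 B ∧
        (∀ z, z ≤ 0 → c + r z = min 0 z → z = A) ∧
        (∀ z, 0 ≤ z → c + r z = min 0 z → z = B) ∧
        ((c + r (b - zn) < min 0 (b - zn)) ↔ b - zn ∈ Set.Ioo A B) ∧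
        ((c + r (b - zn) ≤ min 0 (b - zn)) ↔ b - zn ∈ Set.Icc A B)) ∧
    (0 < c + r 0 → ¬ c + r (b - zn) < min 0 (b - zn)) := by
  set x := b - zn with hx
  set f : ℝ → ℝ := fun z => min 0 z - r z with hfdef
  have hfcont : Continuous f := (continuous_const.min continuous_id).sub hcont
  constructor
  · intro h0
    have hf0 : c ≤ f 0 := by simp [hfdef]; linarith
    -- existence of A
    obtain ⟨w₀, hw₀c, hw₀0⟩ : ∃ w₀, f w₀ < c ∧ w₀ ≤ 0 := by
      have h1 : ∀ᶠ w in atBot, f w < c := hbot.eventually_lt_const hc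
      exact (h1.and (eventually_le_atBot 0)).exists
    obtain ⟨A, hAmem, hAeq⟩ : ∃ A ∈ Set.Icc w₀ 0, f A = c := by
      have := intermediate_value_Icc hw₀0 hfcont.continuousOn
      exact this ⟨le_of_lt hw₀c, hf0⟩
    obtain ⟨w₁, hw₁c, hw₁0⟩ : ∃ w₁, f w₁ < c ∧ 0 ≤ w₁ := by
      have h1 : ∀ᶠ w in atTop, f w < c := htop.eventually_lt_const hc
      exact (h1.and (eventually_ge_atTop 0)).exists
    obtain ⟨B, hBmem, hBeq⟩ : ∃ B ∈ Set.Icc 0 w₁, f B = c := by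
      have := intermediate_value_Icc' hw₁0 hfcont.continuousOn
      exact this ⟨le_of_lt hw₁c, hf0⟩
    have hA0 : A ≤ 0 := hAmem.2
    have hB0 : 0 ≤ B := hBmem.1
    have eA : c + r A = min 0 A := by
      have : min 0 A - r A = c := hAeq
      linarith
    have eB : c + r B = min 0 B := by
      have : min 0 B - r B = c := hBeq
      linarith
    have uA : ∀ z, z ≤ 0 → c + r z = min 0 z → z = A := by
      intro z hz hez
      by_contra hne
      rcases lt_or_gt_of_ne hne with h | h
      · exact no_two_left r c hc hconc hbot h hA0 hez eA
      · exact no_two_left r c hc hconc hbot h hz eA hez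
    have uB : ∀ z, 0 ≤ z → c + r z = min 0 z → z = B := by
      intro z hz hez
      by_contra hne
      rcases lt_or_gt_of_ne hne with h | h
      · exact no_two_right r c hc hconc htop h hz hez eB
      · exact no_two_right r c hc hconc htop h hB0 eB hez
    have rA : r A = A - c := by rw [min_eq_right hA0] at eA; linarith
    have rB : r B = -c := by rw [min_eq_left hB0] at eB; linarith
    refine ⟨A, B, hA0, hB0, eA, eB, uA, uB, ?_, ?_⟩
    · constructor
      · intro hlt
        constructor
        · by_contra h
          push_neg at h
          have hx0 : x ≤ 0 := le_trans h hA0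
          rw [min_eq_right hx0] at hlt
          have := hmono2 h
          simp only at this
          linarith
        · by_contra h
          push_neg at h
          have hx0 : 0 ≤ x := le_trans hB0 h
          rw [min_eq_left hx0] at hlt
          have := hmono h
          linarith
      · rintro ⟨hAx, hxB⟩
        rcases le_or_gt x 0 with hx0 | hx0
        · rw [min_eq_right hx0]
          have := hmono2 (le_of_lt hAx)
          simp only at this
          have hne : c + r x ≠ x := by
            intro heq
            have := uA x hx0 (by rw [min_eq_right hx0]; exact heq)
            linarith
          have : c + r x ≤ x := by linarith
          exact lt_of_le_of_ne this hne
        · rw [min_eq_left (le_of_lt hx0)]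
          have := hmono (le_of_lt hxB)
          have hne : c + r x ≠ 0 := by
            intro heq
            have := uB x (le_of_lt hx0) (by rw [min_eq_left (le_of_lt hx0)]; exact heq)
            linarith
          have : c + r x ≤ 0 := by linarith
          exact lt_of_le_of_ne this hne
    · constructor
      · intro hle
        constructor
        · by_contra h
          push_neg at h
          have hx0 : x ≤ 0 := le_of_lt (lt_of_lt_of_le h hA0)
          rw [min_eq_right hx0] at hle
          have := hmono2 (le_of_lt h)
          simp only at this
          have heq : c + r x = x := le_antisymm hle (by linarith)
          have := uA x hx0 (by rw [min_eq_right hx0]; exact heq)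
          linarith
        · by_contra h
          push_neg at h
          have hx0 : 0 ≤ x := le_of_lt (lt_of_le_of_lt hB0 h)
          rw [min_eq_left hx0] at hle
          have := hmono (le_of_lt h)
          have heq : c + r x = 0 := le_antisymm hle (by linarith)
          have := uB x hx0 (by rw [min_eq_left hx0]; exact heq)
          linarith
      · rintro ⟨hAx, hxB⟩
        rcases le_or_gt x 0 with hx0 | hx0
        · rw [min_eq_right hx0]
          have := hmono2 hAx
          simp only at this
          linarith
        · rw [min_eq_left (le_of_lt hx0)]
          have := hmono hxB
          linarith
  · intro h0 hlt
    rcases le_or_gt x 0 with hx0 | hx0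
    · rw [min_eq_right hx0] at hlt
      have := hmono2 hx0
      simp only [sub_zero] at this
      linarith
    · rw [min_eq_left (le_of_lt hx0)] at hlt
      have := hmono (le_of_lt hx0)
      linarith
end

section
/- Finiteness of the expected sample size for interval-type stopping rules in the periodic case: Suppose the densities are T-periodic in n (f_{θ,n+T} = f_{θ,n}) and P_{θ₀}(Σ_{j=1}^T qⱼ = 0) < 1, where qⱼ = ḟ_{θ₀,j}(Xⱼ)/f_{θ₀,j}(Xⱼ) are independent scores. Let ψ be any stopping rule that continues at stage n only if Σ_{i=1}^n q_i ∈ b − Δ̄ₙ for bounded intervals Δ̄ₙ with Δ̄ₙ = Δ̄_{n+T} (periodic) and Δ̄ₙ ⊆ Δ̄ for some fixed bounded interval Δ̄. Then P_{θ₀}(τ_ψ > kT) decays exponentially in k and E_{θ₀}τ_ψ < ∞. -/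
open MeasureTheory Filter
open scoped ENNReal

section PFSSAux

open ProbabilityTheory

variable {Ω : Type*} [MeasurableSpace Ω] {P : Measure Ω}

private lemma pfss_div_lt (m A : ℕ) (hA : 0 < A) : (m:ℝ)/A < (m/A : ℕ) + 1 := by
  have h1 : A * (m / A) + m % A = m := Nat.div_add_mod m A
  have h2 : m % A < A := Nat.mod_lt m hA
  have hA' : (0:ℝ) < A := by exact_mod_cast hA
  rw [div_lt_iff₀ hA']
  have h3 : (m:ℝ) = A * (m/A : ℕ) + (m % A : ℕ) := by exact_mod_cast h1.symm
  rw [h3]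
  have h4 : ((m % A : ℕ):ℝ) < A := by exact_mod_cast h2
  nlinarith [h4]

private lemma pfss_shift (q : ℕ → Ω → ℝ) (T : ℕ)
    (hper : ∀ j, Measure.map (q (j + T)) P = Measure.map (q j) P) :
    ∀ c j, Measure.map (q (j + c*T)) P = Measure.map (q j) P := by
  intro c
  induction c with
  | zero => simp
  | succ c ih =>
    intro j
    have h : j + (c+1)*T = (j + c*T) + T := by ring
    rw [h, hper, ih]

private lemma pfss_identDistrib_add [IsProbabilityMeasure P] {f g f' g' : Ω → ℝ}
    (hf : Measurable f) (hg : Measurable g) (hf' : Measurable f') (hg' : Measurable g')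
    (h1 : IdentDistrib f f' P P) (h2 : IdentDistrib g g' P P)
    (hi : IndepFun f g P) (hi' : IndepFun f' g' P) :
    IdentDistrib (fun ω => f ω + g ω) (fun ω => f' ω + g' ω) P P := by
  have hpair : IdentDistrib (fun ω => (f ω, g ω)) (fun ω => (f' ω, g' ω)) P P :=
    ⟨(hf.prodMk hg).aemeasurable, (hf'.prodMk hg').aemeasurable, by
      rw [(indepFun_iff_map_prod_eq_prod_map_map hf.aemeasurable hg.aemeasurable).1 hi,
        (indepFun_iff_map_prod_eq_prod_map_map hf'.aemeasurable hg'.aemeasurable).1 hi',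
        h1.map_eq, h2.map_eq]⟩
  exact hpair.comp measurable_add

private lemma pfss_sumshift [IsProbabilityMeasure P] (q : ℕ → Ω → ℝ)
    (hqm : ∀ j, Measurable (q j))
    (hindep : ProbabilityTheory.iIndepFun q P)
    (T : ℕ) (hper : ∀ j, Measure.map (q (j + T)) P = Measure.map (q j) P)
    (c : ℕ) :
    ∀ t : ℕ, IdentDistrib (fun ω => ∑ j ∈ Finset.range t, q (c*T + j) ω)
      (fun ω => ∑ j ∈ Finset.range t, q j ω) P P := by
  intro t
  induction t with
  | zero => simpa using IdentDistrib.refl aemeasurable_const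
  | succ t ih =>
    have hmsum : ∀ (a : ℕ), Measurable (fun ω => ∑ j ∈ Finset.range t, q (a + j) ω) :=
      fun a => Finset.measurable_sum _ (fun i _ => hqm _)
    have hq_id : IdentDistrib (q (c*T + t)) (q t) P P :=
      ⟨(hqm _).aemeasurable, (hqm _).aemeasurable, by
        rw [Nat.add_comm (c*T) t]; exact pfss_shift q T hper c t⟩
    have hsum_eq : ∀ (a : ℕ), (∑ j ∈ (Finset.range t).image (fun j => a + j), q j)
        = fun ω => ∑ j ∈ Finset.range t, q (a + j) ω := by
      intro a
      funext ω
      rw [Finset.sum_apply]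
      rw [Finset.sum_image (by intro x _ y _ h; exact Nat.add_left_cancel h)]
    have hi : IndepFun (fun ω => ∑ j ∈ Finset.range t, q (c*T + j) ω) (q (c*T + t)) P := by
      rw [← hsum_eq (c*T)]
      exact hindep.indepFun_finset_sum_of_notMem hqm (by simp)
    have hi' : IndepFun (fun ω => ∑ j ∈ Finset.range t, q j ω) (q t) P := by
      have h : (∑ j ∈ Finset.range t, q j) = fun ω => ∑ j ∈ Finset.range t, q j ω := by
        funext ω; rw [Finset.sum_apply]
      rw [← h]
      exact hindep.indepFun_finset_sum_of_notMem hqm Finset.notMem_range_self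
    have hres := pfss_identDistrib_add (hmsum (c*T)) (hqm (c*T+t))
      ((Finset.measurable_sum _ (fun i _ => hqm i)) :
        Measurable fun ω => ∑ j ∈ Finset.range t, q j ω)
      (hqm t) ih hq_id hi hi'
    simpa [Finset.sum_range_succ] using hres

private lemma pfss_blockProd (q : ℕ → Ω → ℝ) (hqm : ∀ j, Measurable (q j))
    (hindep : ProbabilityTheory.iIndepFun q P)
    [IsProbabilityMeasure P] (B s : ℕ) (E : ℕ → Set ℝ) (hE : ∀ m, MeasurableSet (E m)) :
    ∀ k, P (⋂ m ∈ Finset.range k, (fun ω => ∑ j ∈ Finset.range B, q ((m+s)*B + j) ω) ⁻¹' E m)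
      = ∏ m ∈ Finset.range k,
          P ((fun ω => ∑ j ∈ Finset.range B, q ((m+s)*B + j) ω) ⁻¹' E m) := by
  intro k
  induction k with
  | zero => simp [measure_univ]
  | succ k ih =>
    set V : ℕ → Ω → ℝ := fun m ω => ∑ j ∈ Finset.range B, q ((m+s)*B + j) ω with hV
    set M : ℕ → MeasurableSpace Ω := fun i => MeasurableSpace.comap (q i) inferInstance with hM
    have h_le : ∀ i, M i ≤ ‹MeasurableSpace Ω› := fun i => (hqm i).comap_le
    have hqM : ∀ i, Measurable[M i] (q i) := fun i => measurable_iff_comap_le.mpr le_rfl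
    have hdisj : Disjoint {i : ℕ | i < (k+s)*B} {i : ℕ | (k+s)*B ≤ i} := by
      rw [Set.disjoint_left]; intro a ha hb; exact absurd hb (by simpa using ha)
    have hInd := indep_iSup_of_disjoint h_le hindep.iIndep hdisj
    have hVmeas : ∀ (S : Set ℕ) (m : ℕ), (∀ j < B, (m+s)*B + j ∈ S) →
        Measurable[⨆ i ∈ S, M i] (V m) := by
      intro S m hmem
      apply Finset.measurable_sum
      intro j hj
      exact ((hqM _).mono (le_iSup₂ (f := fun i (_ : i ∈ S) => M i) ((m+s)*B + j)
        (hmem j (Finset.mem_range.1 hj))) le_rfl)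
    have hpast : MeasurableSet[⨆ i ∈ {i : ℕ | i < (k+s)*B}, M i]
        (⋂ m ∈ Finset.range k, V m ⁻¹' E m) := by
      refine MeasurableSet.biInter (Finset.range k).countable_toSet (fun m hm => ?_)
      refine hVmeas _ m (fun j hj => ?_) (hE m)
      have hmk : m < k := Finset.mem_range.1 (by exact_mod_cast hm)
      have h2 : (m+s+1)*B ≤ (k+s)*B := Nat.mul_le_mul_right _ (by omega)
      simp only [Set.mem_setOf_eq]
      calc (m+s)*B + j < (m+s+1)*B := by rw [Nat.succ_mul]; omega
        _ ≤ (k+s)*B := h2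
    have hfut : MeasurableSet[⨆ i ∈ {i : ℕ | (k+s)*B ≤ i}, M i] (V k ⁻¹' E k) := by
      refine hVmeas _ k (fun j hj => ?_) (hE k)
      simp only [Set.mem_setOf_eq]; omega
    have hmul := ((Indep_iff _ _ _).1 hInd) _ _ hpast hfut
    rw [Finset.range_add_one, Finset.set_biInter_insert,
      Finset.prod_insert Finset.notMem_range_self, Set.inter_comm, ← ih]
    exact hmul.trans (mul_comm _ _)

private lemma pfss_sum_mul (f : ℕ → ℝ) (T : ℕ) :
    ∀ L, ∑ j ∈ Finset.range (L*T), f j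
      = ∑ m ∈ Finset.range L, ∑ j ∈ Finset.range T, f (m*T + j) := by
  intro L
  induction L with
  | zero => simp
  | succ L ih =>
    have h : (L+1)*T = L*T + T := by ring
    rw [h, Finset.sum_range_add, ih, Finset.sum_range_succ]

end PFSSAux

/-- Finiteness of the expected sample size for interval-type stopping rules in the
periodic case: if the independent scores `qⱼ` are `T`-periodic in distribution,
`P_{θ₀}(Σ_{j<T} qⱼ = 0) < 1`, and the stopping time `τ` continues at stage `n`
only when `b − Σ_{i≤n} qᵢ` lies in a periodic family of intervals `Δₙ` contained
in a fixed bounded interval, then `P_{θ₀}(τ > kT)` decays exponentially in `k`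
and `E_{θ₀}τ < ∞`. -/
theorem periodic_finite_sample_size
    {Ω : Type*} [MeasurableSpace Ω] (P : Measure Ω) [IsProbabilityMeasure P]
    (q : ℕ → Ω → ℝ) (hqm : ∀ j, Measurable (q j))
    (hindep : ProbabilityTheory.iIndepFun q P)
    (T : ℕ) (hT : 0 < T)
    (hper : ∀ j, Measure.map (q (j + T)) P = Measure.map (q j) P)
    (hnondeg : P {ω | ∑ j ∈ Finset.range T, q j ω = 0} < 1)
    (b R : ℝ)
    (Δ : ℕ → Set ℝ) (hΔper : ∀ n, Δ (n + T) = Δ n) (hΔbdd : ∀ n, Δ n ⊆ Set.Icc (-R) R)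
    (τ : Ω → ℕ∞)
    (hcont : ∀ (n : ℕ) (ω : Ω), (n : ℕ∞) < τ ω → b - ∑ i ∈ Finset.range (n+1), q i ω ∈ Δ n) :
    (∃ C ρ : ℝ, 0 < C ∧ ρ ∈ Set.Ico (0:ℝ) 1 ∧
      ∀ k : ℕ, (P {ω | ((k * T : ℕ) : ℕ∞) < τ ω}).toReal ≤ C * ρ ^ k) ∧
    ∑' n : ℕ, P {ω | (n : ℕ∞) < τ ω} < ⊤ := by
  classical
  open ProbabilityTheory in
  -- Step 1: the block sum over one period is nonzero with positive probability,
  -- hence bounded away from zero on a positive-probability event.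
  set ξ : Ω → ℝ := fun ω => ∑ j ∈ Finset.range T, q j ω with hξ
  have hξm : Measurable ξ := Finset.measurable_sum _ (fun i _ => hqm i)
  have hne : 0 < P {ω | ξ ω ≠ 0} := by
    have hms : MeasurableSet {ω | ξ ω = 0} := measurableSet_eq_fun hξm measurable_const
    have h1 : P {ω | ξ ω = 0}ᶜ = 1 - P {ω | ξ ω = 0} := prob_compl_eq_one_sub hms
    have h2 : {ω | ξ ω = 0}ᶜ = {ω | ξ ω ≠ 0} := by ext ω; simp
    rw [← h2, h1]
    exact tsub_pos_iff_lt.2 hnondeg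
  obtain ⟨n0, hn0⟩ : ∃ n : ℕ, 0 < P {ω | 1/((n:ℝ)+1) < |ξ ω|} := by
    by_contra hcon
    push_neg at hcon
    have hz : ∀ n : ℕ, P {ω | 1/((n:ℝ)+1) < |ξ ω|} = 0 :=
      fun n => le_antisymm (hcon n) (zero_le)
    have hsub : {ω | ξ ω ≠ 0} ⊆ ⋃ n : ℕ, {ω | 1/((n:ℝ)+1) < |ξ ω|} := by
      intro ω hω
      have hpos : 0 < |ξ ω| := abs_pos.2 hω
      obtain ⟨n, hn⟩ := exists_nat_one_div_lt hpos
      exact Set.mem_iUnion.2 ⟨n, hn⟩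
    have h0 : P {ω | ξ ω ≠ 0} = 0 := measure_mono_null hsub (measure_iUnion_null hz)
    exact absurd h0 hne.ne'
  set ε : ℝ := 1/((n0:ℝ)+1) with hε
  have hεpos : 0 < ε := by positivity
  have honeside : 0 < P {ω | ε < ξ ω} ∨ 0 < P {ω | ξ ω < -ε} := by
    by_contra hcon
    push_neg at hcon
    obtain ⟨h1, h2⟩ := hcon
    have hsub : {ω | ε < |ξ ω|} ⊆ {ω | ε < ξ ω} ∪ {ω | ξ ω < -ε} := by
      intro ω hω
      have hω' : ε < |ξ ω| := hω
      rcases lt_abs.1 hω' with h | h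
      · exact Or.inl h
      · exact Or.inr (lt_neg.1 h)
    have hz : P {ω | ε < |ξ ω|} = 0 := by
      refine measure_mono_null hsub ?_
      have hle := measure_union_le (μ := P) {ω | ε < ξ ω} {ω | ξ ω < -ε}
      have h1' : P {ω | ε < ξ ω} = 0 := le_antisymm h1 (zero_le)
      have h2' : P {ω | ξ ω < -ε} = 0 := le_antisymm h2 (zero_le)
      simp only [h1', h2', add_zero] at hle
      exact le_antisymm hle (zero_le)
    rw [hz] at hn0
    exact absurd rfl hn0.ne'
  obtain ⟨U, hUm, hUpos, hUprop⟩ : ∃ U : Set ℝ, MeasurableSet U ∧ 0 < P (ξ ⁻¹' U) ∧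
      ((∀ y ∈ U, ε < y) ∨ (∀ y ∈ U, y < -ε)) := by
    rcases honeside with h | h
    · exact ⟨Set.Ioi ε, measurableSet_Ioi, h, Or.inl (fun y hy => hy)⟩
    · exact ⟨Set.Iio (-ε), measurableSet_Iio, h, Or.inr (fun y hy => hy)⟩
  -- Step 2: choose the number `L` of periods needed to exit the interval.
  set L : ℕ := ⌈(2*R+1)/ε⌉₊ + 1 with hLdef
  have hLpos : 0 < L := Nat.succ_pos _
  have hLε : 2*R + 1 ≤ L * ε := by
    have h1 : (2*R+1)/ε ≤ (⌈(2*R+1)/ε⌉₊ : ℝ) := Nat.le_ceil _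
    have h2 : ((⌈(2*R+1)/ε⌉₊ : ℕ):ℝ) ≤ (L:ℝ) := by exact_mod_cast Nat.le_succ _
    have h3 := h1.trans h2
    rwa [div_le_iff₀ hεpos] at h3
  set B : ℕ := L*T with hBdef
  have hBpos : 0 < B := Nat.mul_pos hLpos hT
  set ζ : Ω → ℝ := fun ω => ∑ j ∈ Finset.range B, q j ω with hζ
  have hζm : Measurable ζ := Finset.measurable_sum _ (fun i _ => hqm i)
  set I2 : Set ℝ := Set.Icc (-(2*R)) (2*R) with hI2
  set p : ℝ≥0∞ := P (ζ ⁻¹' I2) with hp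
  set δ : ℝ≥0∞ := P (ζ ⁻¹' I2ᶜ) with hδ
  -- Step 3: δ is positive, so p < 1.
  have hδpos : 0 < δ := by
    have hsubU : (⋂ m ∈ Finset.range L,
        (fun ω => ∑ j ∈ Finset.range T, q ((m+0)*T + j) ω) ⁻¹' U) ⊆ ζ ⁻¹' I2ᶜ := by
      intro ω hω
      simp only [Set.mem_iInter, Set.mem_preimage] at hω
      have hζω : ζ ω = ∑ m ∈ Finset.range L, ∑ j ∈ Finset.range T, q (m*T + j) ω := by
        simpa [hζ, hBdef] using pfss_sum_mul (fun j => q j ω) T L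
      have hmem : ∀ m ∈ Finset.range L, (∑ j ∈ Finset.range T, q (m*T + j) ω) ∈ U := by
        intro m hm
        simpa using hω m hm
      have hnemp : (Finset.range L).Nonempty := Finset.nonempty_range_iff.2 hLpos.ne'
      rcases hUprop with hcase | hcase
      · have hgt : (L:ℝ) * ε < ζ ω := by
          rw [hζω]
          calc (L:ℝ) * ε = ∑ _m ∈ Finset.range L, ε := by
                rw [Finset.sum_const, Finset.card_range, nsmul_eq_mul]
            _ < _ := Finset.sum_lt_sum_of_nonempty hnemp
                (fun m hm => hcase _ (hmem m hm))
        have hgt2 : 2*R < ζ ω := by linarith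
        simp only [Set.mem_preimage, Set.mem_compl_iff, hI2, Set.mem_Icc]
        intro hcc
        linarith [hcc.2]
      · have hlt : ζ ω < -((L:ℝ) * ε) := by
          rw [hζω]
          calc (∑ m ∈ Finset.range L, ∑ j ∈ Finset.range T, q (m*T + j) ω)
              < ∑ _m ∈ Finset.range L, (-ε) := Finset.sum_lt_sum_of_nonempty hnemp
                (fun m hm => hcase _ (hmem m hm))
            _ = -((L:ℝ) * ε) := by
                rw [Finset.sum_const, Finset.card_range, nsmul_eq_mul]; ring
        have hlt2 : ζ ω < -(2*R) := by linarith
        simp only [Set.mem_preimage, Set.mem_compl_iff, hI2, Set.mem_Icc]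
        intro hcc
        linarith [hcc.1]
    have hprod := pfss_blockProd q hqm hindep T 0 (fun _ => U) (fun _ => hUm) L
    have hc : ∀ m ∈ Finset.range L,
        P ((fun ω => ∑ j ∈ Finset.range T, q ((m+0)*T + j) ω) ⁻¹' U) = P (ξ ⁻¹' U) := by
      intro m _
      have hid := pfss_sumshift q hqm hindep T hper m T
      have hmm := hid.measure_mem_eq hUm
      simpa [Nat.add_zero] using hmm
    rw [Finset.prod_congr rfl hc, Finset.prod_const, Finset.card_range] at hprod
    calc (0:ℝ≥0∞) < P (ξ ⁻¹' U) ^ L := ENNReal.pow_pos hUpos L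
      _ = _ := hprod.symm
      _ ≤ δ := measure_mono hsubU
  have hplt1 : p < 1 := by
    have hAm : MeasurableSet (ζ ⁻¹' I2) := hζm measurableSet_Icc
    have hsum : p + δ = 1 := by
      rw [hp, hδ, Set.preimage_compl]
      exact prob_add_prob_compl hAm
    have h : p < p + δ := ENNReal.lt_add_right (measure_ne_top P (ζ ⁻¹' I2)) hδpos.ne'
    rwa [hsum] at h
  -- Step 4: exponential decay along blocks of length B.
  have hFmP : ∀ m : ℕ,
      P ((fun ω => ∑ j ∈ Finset.range B, q ((m+1)*B + j) ω) ⁻¹' I2) = p := by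
    intro m
    have hid := pfss_sumshift q hqm hindep T hper ((m+1)*L) B
    have hidx : ((m+1)*L)*T = (m+1)*B := by rw [hBdef, Nat.mul_assoc]
    rw [hidx] at hid
    exact hid.measure_mem_eq measurableSet_Icc
  have hkeyblk : ∀ k : ℕ, P {ω | (((k+1)*B : ℕ) : ℕ∞) < τ ω} ≤ p ^ k := by
    intro k
    have hsub : {ω | (((k+1)*B : ℕ) : ℕ∞) < τ ω} ⊆
        ⋂ m ∈ Finset.range k, (fun ω => ∑ j ∈ Finset.range B, q ((m+1)*B + j) ω) ⁻¹' I2 := by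
      intro ω hω
      simp only [Set.mem_iInter, Set.mem_preimage]
      intro m hm
      have hmk : m < k := Finset.mem_range.1 hm
      have hτ : ∀ n : ℕ, n < (k+1)*B → (n : ℕ∞) < τ ω := by
        intro n hn
        exact lt_trans (by exact_mod_cast hn) hω
      have hlt1 : (m+1)*B - 1 < (k+1)*B := by
        have h1 : (m+1)*B ≤ (k+1)*B := Nat.mul_le_mul_right _ (by omega)
        have h2 : 0 < (m+1)*B := Nat.mul_pos (Nat.succ_pos _) hBpos
        omega
      have hlt2 : (m+2)*B - 1 < (k+1)*B := by
        have h1 : (m+2)*B ≤ (k+1)*B := Nat.mul_le_mul_right _ (by omega)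
        have h2 : 0 < (m+2)*B := Nat.mul_pos (Nat.succ_pos _) hBpos
        omega
      have e1 : (m+1)*B - 1 + 1 = (m+1)*B :=
        Nat.succ_pred_eq_of_pos (Nat.mul_pos (Nat.succ_pos _) hBpos)
      have e2 : (m+2)*B - 1 + 1 = (m+2)*B :=
        Nat.succ_pred_eq_of_pos (Nat.mul_pos (Nat.succ_pos _) hBpos)
      have h1 := hcont ((m+1)*B - 1) ω (hτ _ hlt1)
      have h2 := hcont ((m+2)*B - 1) ω (hτ _ hlt2)
      rw [e1] at h1
      rw [e2] at h2
      obtain ⟨ha1, hb1⟩ := (hΔbdd _) h1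
      obtain ⟨ha2, hb2⟩ := (hΔbdd _) h2
      have hval : ∑ j ∈ Finset.range B, q ((m+1)*B + j) ω
          = (∑ i ∈ Finset.range ((m+2)*B), q i ω) - ∑ i ∈ Finset.range ((m+1)*B), q i ω := by
        have h : (m+2)*B = (m+1)*B + B := by ring
        rw [h, Finset.sum_range_add]
        ring
      rw [hval]
      constructor
      · linarith
      · linarith
    calc P {ω | (((k+1)*B : ℕ) : ℕ∞) < τ ω}
        ≤ P (⋂ m ∈ Finset.range k,
            (fun ω => ∑ j ∈ Finset.range B, q ((m+1)*B + j) ω) ⁻¹' I2) := measure_mono hsub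
      _ = ∏ m ∈ Finset.range k,
            P ((fun ω => ∑ j ∈ Finset.range B, q ((m+1)*B + j) ω) ⁻¹' I2) :=
          pfss_blockProd q hqm hindep B 1 (fun _ => I2) (fun _ => measurableSet_Icc) k
      _ = p ^ k := by
          rw [Finset.prod_congr rfl (fun m _ => hFmP m), Finset.prod_const, Finset.card_range]
  -- Step 5: convert to an exponential bound in `k` for `P(τ > kT)`.
  set pr : ℝ := p.toReal with hprdef
  have hpne : p ≠ ⊤ := hplt1.ne_top
  have hpr0 : 0 ≤ pr := ENNReal.toReal_nonneg
  have hpr1 : pr < 1 := by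
    have h := ENNReal.toReal_lt_toReal hpne (by simp : (1:ℝ≥0∞) ≠ ⊤) |>.2 hplt1
    simpa using h
  set r' : ℝ := max pr (1/2) with hr'def
  have hr'0 : (0:ℝ) < r' := lt_of_lt_of_le one_half_pos (le_max_right _ _)
  have hr'half : (1/2 : ℝ) ≤ r' := le_max_right _ _
  have hr'lt1 : r' < 1 := max_lt hpr1 (by norm_num)
  set ρ : ℝ := r' ^ ((L:ℝ)⁻¹) with hρdef
  have hρpos : 0 < ρ := Real.rpow_pos_of_pos hr'0 _
  have hρlt1 : ρ < 1 := Real.rpow_lt_one hr'0.le hr'lt1 (by positivity)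
  have key : ∀ k : ℕ, (P {ω | ((k * T : ℕ) : ℕ∞) < τ ω}).toReal ≤ 4 * ρ ^ k := by
    intro k
    set u : ℕ := k / L with hudef
    have step1 : (P {ω | ((k * T : ℕ) : ℕ∞) < τ ω}).toReal ≤ pr ^ (u - 1) := by
      rcases Nat.eq_zero_or_pos u with hu0 | hu1
      · have h1 : (P {ω | ((k * T : ℕ) : ℕ∞) < τ ω}).toReal ≤ 1 := by
          have h := ENNReal.toReal_mono (by simp : (1:ℝ≥0∞) ≠ ⊤)
            (prob_le_one (μ := P) (s := {ω | ((k * T : ℕ) : ℕ∞) < τ ω}))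
          simpa using h
        simpa [hu0] using h1
      · have hmono : {ω | ((k*T : ℕ):ℕ∞) < τ ω} ⊆ {ω | ((((u-1)+1)*B : ℕ):ℕ∞) < τ ω} := by
          intro ω hω
          have hle : ((u-1)+1)*B ≤ k*T := by
            have he : (u-1)+1 = u := Nat.succ_pred_eq_of_pos hu1
            rw [he, hBdef, ← Nat.mul_assoc]
            exact Nat.mul_le_mul_right T (Nat.div_mul_le_self k L)
          exact lt_of_le_of_lt
            (by exact_mod_cast hle : ((((u-1)+1)*B : ℕ):ℕ∞) ≤ ((k*T : ℕ):ℕ∞)) hω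
        have hle2 := (measure_mono hmono).trans (hkeyblk (u-1))
        have h2 : (P {ω | ((k*T : ℕ):ℕ∞) < τ ω}).toReal ≤ (p ^ (u-1)).toReal :=
          ENNReal.toReal_mono (ENNReal.pow_ne_top hpne) hle2
        rwa [ENNReal.toReal_pow] at h2
    have hpr_le : pr ^ (u-1) ≤ r' ^ (u-1) := pow_le_pow_left₀ hpr0 (le_max_left _ _) _
    have hcast : ((k:ℝ))/L - 2 ≤ ((u - 1 : ℕ) : ℝ) := by
      have hlt := pfss_div_lt k L hLpos
      rw [← hudef] at hlt
      rcases Nat.eq_zero_or_pos u with h0 | h1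
      · rw [h0] at hlt ⊢
        simp only [Nat.zero_sub, Nat.cast_zero] at *
        linarith
      · have hcs : ((u - 1 : ℕ):ℝ) = (u:ℝ) - 1 := by
          rw [Nat.cast_sub h1]; simp
        rw [hcs]
        linarith
    have hstep : r' ^ (u-1) ≤ r' ^ ((k:ℝ)/L - 2 : ℝ) := by
      rw [← Real.rpow_natCast r' (u-1)]
      exact Real.rpow_le_rpow_of_exponent_ge hr'0 hr'lt1.le hcast
    have hsplit : r' ^ ((k:ℝ)/L - 2 : ℝ) = r' ^ (-2 : ℝ) * ρ ^ k := by
      calc r' ^ ((k:ℝ)/L - 2 : ℝ) = r' ^ ((L:ℝ)⁻¹ * k + (-2)) := by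
            rw [div_eq_inv_mul]; ring_nf
        _ = r' ^ ((L:ℝ)⁻¹ * k) * r' ^ (-2:ℝ) := Real.rpow_add hr'0 _ _
        _ = (r' ^ ((L:ℝ)⁻¹)) ^ k * r' ^ (-2:ℝ) := by
            rw [Real.rpow_mul hr'0.le, Real.rpow_natCast]
        _ = r' ^ (-2 : ℝ) * ρ ^ k := by rw [hρdef]; ring
    have h4 : r' ^ (-2 : ℝ) ≤ 4 := by
      rw [Real.rpow_neg hr'0.le]
      have h2 : r' ^ (2:ℝ) = r' * r' := by
        rw [show (2:ℝ) = ((2:ℕ):ℝ) by norm_num, Real.rpow_natCast]; ring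
      rw [h2]
      have hq4 : (4:ℝ)⁻¹ ≤ r' * r' := by nlinarith
      calc (r' * r')⁻¹ ≤ ((4:ℝ)⁻¹)⁻¹ := inv_anti₀ (by norm_num) hq4
        _ = 4 := by norm_num
    calc (P {ω | ((k * T : ℕ) : ℕ∞) < τ ω}).toReal
        ≤ pr ^ (u-1) := step1
      _ ≤ r' ^ (u-1) := hpr_le
      _ ≤ r' ^ ((k:ℝ)/L - 2 : ℝ) := hstep
      _ = r' ^ (-2 : ℝ) * ρ ^ k := hsplit
      _ ≤ 4 * ρ ^ k := mul_le_mul_of_nonneg_right h4 (pow_nonneg hρpos.le k)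
  refine ⟨⟨4, ρ, by norm_num, ⟨hρpos.le, hρlt1⟩, key⟩, ?_⟩
  -- Step 6: summability of the tail probabilities.
  have hsummand : ∀ n : ℕ, P {ω | (n : ℕ∞) < τ ω} ≤ ENNReal.ofReal (4 * ρ ^ (n / T)) := by
    intro n
    have hsub : {ω | (n : ℕ∞) < τ ω} ⊆ {ω | (((n/T)*T : ℕ) : ℕ∞) < τ ω} := by
      intro ω hω
      exact lt_of_le_of_lt
        (by exact_mod_cast Nat.div_mul_le_self n T : (((n/T)*T : ℕ):ℕ∞) ≤ ((n:ℕ):ℕ∞)) hω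
    calc P {ω | (n:ℕ∞) < τ ω} ≤ P {ω | (((n/T)*T : ℕ) : ℕ∞) < τ ω} := measure_mono hsub
      _ = ENNReal.ofReal ((P {ω | (((n/T)*T : ℕ) : ℕ∞) < τ ω}).toReal) :=
          (ENNReal.ofReal_toReal (measure_ne_top P _)).symm
      _ ≤ ENNReal.ofReal (4 * ρ ^ (n/T)) := ENNReal.ofReal_le_ofReal (key (n/T))
  set σ : ℝ := ρ ^ ((T:ℝ)⁻¹) with hσdef
  have hσ0 : 0 ≤ σ := (Real.rpow_pos_of_pos hρpos _).le
  have hσ1 : σ < 1 := Real.rpow_lt_one hρpos.le hρlt1 (by positivity)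
  have hgeom : Summable (fun n : ℕ => (4 * ρ⁻¹) * σ ^ n) :=
    (summable_geometric_of_lt_one hσ0 hσ1).mul_left _
  have hgb : ∀ n : ℕ, 4 * ρ ^ (n/T) ≤ (4 * ρ⁻¹) * σ ^ n := by
    intro n
    have hlt := pfss_div_lt n T hT
    have hc : (n:ℝ)/T - 1 ≤ ((n/T : ℕ):ℝ) := by linarith
    have hb1 : ρ ^ (n/T) ≤ ρ ^ ((n:ℝ)/T - 1 : ℝ) := by
      rw [← Real.rpow_natCast ρ (n/T)]
      exact Real.rpow_le_rpow_of_exponent_ge hρpos hρlt1.le hc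
    have hb2 : ρ ^ ((n:ℝ)/T - 1 : ℝ) = ρ⁻¹ * σ ^ n := by
      calc ρ ^ ((n:ℝ)/T - 1 : ℝ) = ρ ^ ((T:ℝ)⁻¹ * n + (-1)) := by
            rw [div_eq_inv_mul]; ring_nf
        _ = ρ ^ ((T:ℝ)⁻¹ * n) * ρ ^ (-1:ℝ) := Real.rpow_add hρpos _ _
        _ = (ρ ^ ((T:ℝ)⁻¹)) ^ n * ρ ^ (-1:ℝ) := by
            rw [Real.rpow_mul hρpos.le, Real.rpow_natCast]
        _ = ρ⁻¹ * σ ^ n := by rw [hσdef, Real.rpow_neg_one]; ring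
    calc 4 * ρ ^ (n/T) ≤ 4 * (ρ⁻¹ * σ ^ n) := by
          rw [← hb2]; exact mul_le_mul_of_nonneg_left hb1 (by norm_num)
      _ = (4 * ρ⁻¹) * σ ^ n := by ring
  have hgsum : Summable (fun n : ℕ => 4 * ρ ^ (n/T)) :=
    Summable.of_nonneg_of_le (fun n => by positivity) hgb hgeom
  calc ∑' n : ℕ, P {ω | (n:ℕ∞) < τ ω}
      ≤ ∑' n : ℕ, ENNReal.ofReal (4 * ρ ^ (n/T)) := ENNReal.tsum_le_tsum hsummand
    _ = ENNReal.ofReal (∑' n : ℕ, 4 * ρ ^ (n/T)) :=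
        (ENNReal.ofReal_tsum_of_nonneg (fun n => by positivity) hgsum).symm
    _ < ⊤ := ENNReal.ofReal_lt_top
end
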